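/- Node count of the position heap: let T be a string of length n over the alphabet A. Then the set of nonempty strings represented in T is finite, and its cardinality equals n minus the number of secondary positions of T. (Each primary position contributes exactly one new represented string, so the position heap of T has n + 1 nodes minus the number of double nodes.) -/

import Mathlib

/-- `w` occurs in `T` at the (1-indexed) position `p`, i.e. `1 ≤ p ≤ |T| - |w| + 1`
and `T[p..p+|w|-1] = w`. -/
def OccursAt {A : Type*} (T w : List A) (p : ℕ) : Prop :=
  1 ≤ p ∧ p + w.length ≤ T.length + 1 ∧ (T.drop (p - 1)).take w.length = w

/-- `w` is represented in `T`: there are positions `p 1 < p 2 < ... < p |w|` such that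
for each `1 ≤ ℓ ≤ |w|`, the prefix `w[1..ℓ]` occurs in `T` at position `p ℓ`. -/
def Represented {A : Type*} (T w : List A) : Prop :=
  ∃ p : ℕ → ℕ,
    (∀ i j, 1 ≤ i → i < j → j ≤ w.length → p i < p j) ∧
    (∀ ℓ, 1 ≤ ℓ → ℓ ≤ w.length → OccursAt T (w.take ℓ) (p ℓ))

/-- A position `j` with `1 ≤ j ≤ |T|` is secondary if there are positions
`p 1 < p 2 < ... < p (|T| - j + 1)`, all strictly less than `j`, such that for each
`1 ≤ ℓ ≤ |T| - j + 1`, the prefix `T[j..j+ℓ-1]` of the suffix `T[j..|T|]`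
occurs in `T` at position `p ℓ`. -/
def Secondary {A : Type*} (T : List A) (j : ℕ) : Prop :=
  1 ≤ j ∧ j ≤ T.length ∧
  ∃ p : ℕ → ℕ,
    (∀ i i', 1 ≤ i → i < i' → i' ≤ T.length - j + 1 → p i < p i') ∧
    (∀ ℓ, 1 ≤ ℓ → ℓ ≤ T.length - j + 1 →
      p ℓ < j ∧ OccursAt T ((T.drop (j - 1)).take ℓ) (p ℓ))

namespace PosHeap

variable {A : Type*}

/-- `w` is represented in `T` using only positions `≤ j`. -/
def RepB (T w : List A) (j : ℕ) : Prop :=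
  ∃ p : ℕ → ℕ,
    (∀ i i', 1 ≤ i → i < i' → i' ≤ w.length → p i < p i') ∧
    (∀ ℓ, 1 ≤ ℓ → ℓ ≤ w.length → p ℓ ≤ j ∧ OccursAt T (w.take ℓ) (p ℓ))

lemma repB_nil (T : List A) (j : ℕ) : RepB T [] j := by
  refine ⟨id, ?_, ?_⟩
  · intro i i' h1 h2 h3; simp at h3; omega
  · intro ℓ h1 h2; simp at h2; omega

lemma repB_mono {T w : List A} {j j' : ℕ} (h : j ≤ j') (hr : RepB T w j) :
    RepB T w j' := by
  obtain ⟨p, hinc, hocc⟩ := hr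
  exact ⟨p, hinc, fun ℓ h1 h2 => ⟨(hocc ℓ h1 h2).1.trans h, (hocc ℓ h1 h2).2⟩⟩

lemma take_eq_of_prefix {w' w : List A} (hpre : w' <+: w) {ℓ : ℕ} (hℓ : ℓ ≤ w'.length) :
    w'.take ℓ = w.take ℓ := by
  have h := List.prefix_iff_eq_take.mp hpre
  rw [h, List.take_take, min_eq_left hℓ]

lemma repB_prefix {T w w' : List A} {j : ℕ} (hpre : w' <+: w) (hr : RepB T w j) :
    RepB T w' j := by
  obtain ⟨p, hinc, hocc⟩ := hr
  refine ⟨p, fun i i' h1 h2 h3 => hinc i i' h1 h2 (h3.trans hpre.length_le), ?_⟩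
  intro ℓ h1 h2
  have h := hocc ℓ h1 (h2.trans hpre.length_le)
  rwa [take_eq_of_prefix hpre h2]

lemma repB_iff_rec {T w : List A} (hw : w ≠ []) (j : ℕ) :
    RepB T w j ↔ ∃ q, q ≤ j ∧ OccursAt T w q ∧ RepB T w.dropLast (q - 1) := by
  have hlen : 1 ≤ w.length := List.length_pos_iff.mpr hw
  have hdl : w.dropLast.length = w.length - 1 := List.length_dropLast
  have hdltake : ∀ ℓ : ℕ, ℓ ≤ w.length - 1 → w.dropLast.take ℓ = w.take ℓ := by
    intro ℓ hℓ
    rw [List.dropLast_eq_take, List.take_take, min_eq_left hℓ]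
  constructor
  · rintro ⟨p, hinc, hocc⟩
    obtain ⟨hq, hoc⟩ := hocc w.length hlen le_rfl
    rw [List.take_length] at hoc
    refine ⟨p w.length, hq, hoc, p, ?_, ?_⟩
    · intro i i' h1 h2 h3
      exact hinc i i' h1 h2 (by omega)
    · intro ℓ h1 h2
      rw [hdl] at h2
      have hlt : ℓ < w.length := by omega
      obtain ⟨hle, ho⟩ := hocc ℓ h1 hlt.le
      have hpl : p ℓ < p w.length := hinc ℓ w.length h1 hlt le_rfl
      exact ⟨by omega, by rwa [hdltake ℓ h2]⟩
  · rintro ⟨q, hq, hoc, p, hinc, hocc⟩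
    have hq1 : 1 ≤ q := hoc.1
    refine ⟨fun ℓ => if ℓ = w.length then q else p ℓ, ?_, ?_⟩
    · intro i i' h1 h2 h3
      by_cases hi' : i' = w.length
      · have hi : i ≠ w.length := by omega
        simp only [hi, hi', if_true, if_false, if_neg hi]
        by_cases hii : 1 ≤ i ∧ i ≤ w.length - 1
        · have := (hocc i h1 (by omega)).1
          omega
        · omega
      · have hi : i ≠ w.length := by omega
        simp only [if_neg hi, if_neg hi']
        exact hinc i i' h1 h2 (by omega)
    · intro ℓ h1 h2
      by_cases hℓ : ℓ = w.length
      · subst hℓ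
        simp only [if_true, List.take_length]
        exact ⟨hq, hoc⟩
      · have hℓ' : ℓ ≤ w.length - 1 := by omega
        obtain ⟨hle, ho⟩ := hocc ℓ h1 (by omega)
        rw [hdltake ℓ hℓ'] at ho
        simp only [if_neg hℓ]
        exact ⟨by omega, ho⟩

lemma repB_succ_iff {T w : List A} (hw : w ≠ []) {j : ℕ} (hnot : ¬ RepB T w j) :
    RepB T w (j + 1) ↔ (w <+: T.drop j ∧ RepB T w.dropLast j) := by
  have hlen : 1 ≤ w.length := List.length_pos_iff.mpr hw
  constructor
  · intro h
    obtain ⟨q, hq, hoc, hrec⟩ := (repB_iff_rec hw (j + 1)).mp h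
    by_cases hqj : q ≤ j
    · exact absurd ((repB_iff_rec hw j).mpr ⟨q, hqj, hoc, hrec⟩) hnot
    · have hqe : q = j + 1 := by omega
      subst hqe
      obtain ⟨-, hle, heq⟩ := hoc
      have : j + 1 - 1 = j := by omega
      rw [this] at heq
      refine ⟨?_, by simpa using hrec⟩
      rw [List.prefix_iff_eq_take]
      exact heq.symm
  · rintro ⟨hpre, hdl⟩
    have hwl : w.length ≤ T.length - j := by
      have := hpre.length_le
      rwa [List.length_drop] at this
    have hjn : j + 1 ≤ T.length := by omega
    refine (repB_iff_rec hw (j + 1)).mpr ⟨j + 1, le_rfl, ⟨by omega, by omega, ?_⟩, by simpa using hdl⟩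
    have : j + 1 - 1 = j := by omega
    rw [this]
    exact (List.prefix_iff_eq_take.mp hpre).symm

lemma secondary_iff (T : List A) (j : ℕ) :
    Secondary T (j + 1) ↔ j + 1 ≤ T.length ∧ RepB T (T.drop j) j := by
  constructor
  · rintro ⟨-, hjn, p, hinc, hocc⟩
    have hL : (T.drop j).length = T.length - (j + 1) + 1 := by
      rw [List.length_drop]; omega
    refine ⟨hjn, p, ?_, ?_⟩
    · intro i i' h1 h2 h3
      exact hinc i i' h1 h2 (by omega)
    · intro ℓ h1 h2
      rw [hL] at h2
      obtain ⟨hlt, ho⟩ := hocc ℓ h1 h2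
      have : j + 1 - 1 = j := by omega
      rw [this] at ho
      exact ⟨by omega, ho⟩
  · rintro ⟨hjn, p, hinc, hocc⟩
    have hL : (T.drop j).length = T.length - (j + 1) + 1 := by
      rw [List.length_drop]; omega
    refine ⟨by omega, hjn, p, ?_, ?_⟩
    · intro i i' h1 h2 h3
      exact hinc i i' h1 h2 (by omega)
    · intro ℓ h1 h2
      obtain ⟨hle, ho⟩ := hocc ℓ h1 (by omega)
      have hj1 : j + 1 - 1 = j := by omega
      rw [hj1]
      exact ⟨by omega, ho⟩

/-- The set of nonempty strings represented in `T` using positions `≤ j`. -/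
def Rset (T : List A) (j : ℕ) : Set (List A) := {w | w ≠ [] ∧ RepB T w j}

lemma rset_zero (T : List A) : Rset T 0 = ∅ := by
  ext w
  simp only [Rset, Set.mem_setOf_eq, Set.mem_empty_iff_false, iff_false, not_and]
  rintro hw ⟨p, hinc, hocc⟩
  have hlen : 1 ≤ w.length := List.length_pos_iff.mpr hw
  obtain ⟨hle, ho⟩ := hocc 1 le_rfl hlen
  have := ho.1
  omega

lemma rset_succ_of_secondary {T : List A} {j : ℕ} (hsec : Secondary T (j + 1)) :
    Rset T (j + 1) = Rset T j := by
  obtain ⟨hjn, hrep⟩ := (secondary_iff T j).mp hsec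
  ext w
  simp only [Rset, Set.mem_setOf_eq]
  constructor
  · rintro ⟨hw, hr⟩
    refine ⟨hw, ?_⟩
    by_cases hrj : RepB T w j
    · exact hrj
    · obtain ⟨hpre, -⟩ := (repB_succ_iff hw hrj).mp hr
      exact repB_prefix hpre hrep
  · rintro ⟨hw, hr⟩
    exact ⟨hw, repB_mono (by omega) hr⟩

lemma rset_succ_of_primary {T : List A} {j : ℕ} (hjn : j + 1 ≤ T.length)
    (hsec : ¬ Secondary T (j + 1)) :
    ∃ x, x ∉ Rset T j ∧ Rset T (j + 1) = insert x (Rset T j) := by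
  classical
  set S := T.drop j with hS
  have hSlen : S.length = T.length - j := List.length_drop
  have hns : ¬ RepB T S j := fun h => hsec ((secondary_iff T j).mpr ⟨hjn, h⟩)
  have hex : ∃ k, ¬ RepB T (S.take k) j := ⟨S.length, by rwa [List.take_length]⟩
  set m := Nat.find hex with hm
  have hm_spec : ¬ RepB T (S.take m) j := Nat.find_spec hex
  have hm_min : ∀ k, k < m → RepB T (S.take k) j := fun k hk =>
    not_not.mp (Nat.find_min hex hk)
  have hm_pos : 1 ≤ m := by
    by_contra h
    have : m = 0 := by omega
    rw [this] at hm_spec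
    exact hm_spec (by simpa using repB_nil T j)
  have hm_le : m ≤ S.length := Nat.find_le (by rwa [List.take_length])
  have hxlen : (S.take m).length = m := by
    rw [List.length_take, min_eq_left hm_le]
  have hxne : S.take m ≠ [] := by
    intro h
    have := congrArg List.length h
    rw [hxlen] at this
    simp at this
    omega
  refine ⟨S.take m, fun h => hm_spec h.2, ?_⟩
  have hxdl : (S.take m).dropLast = S.take (m - 1) := by
    rw [List.dropLast_eq_take, hxlen, List.take_take, min_eq_left (by omega)]
  ext w
  simp only [Rset, Set.mem_setOf_eq, Set.mem_insert_iff]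
  constructor
  · rintro ⟨hw, hr⟩
    by_cases hrj : RepB T w j
    · exact Or.inr ⟨hw, hrj⟩
    · left
      obtain ⟨hpre, hdl⟩ := (repB_succ_iff hw hrj).mp hr
      have hwt : w = S.take w.length := List.prefix_iff_eq_take.mp hpre
      have hwlS : w.length ≤ S.length := hpre.length_le
      have h1 : m ≤ w.length := by
        by_contra h
        exact hrj (hwt ▸ hm_min w.length (by omega))
      have hwl1 : 1 ≤ w.length := List.length_pos_iff.mpr hw
      have hwdl : w.dropLast = S.take (w.length - 1) := by
        conv_lhs => rw [hwt]
        rw [List.dropLast_eq_take, List.length_take, min_eq_left hwlS,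
          List.take_take, min_eq_left (by omega)]
      have h2 : ¬ (m < w.length) := by
        intro h
        have hpre2 : S.take m <+: S.take (w.length - 1) :=
          List.take_prefix_take_left (by omega)
        rw [← hwdl] at hpre2
        exact hm_spec (repB_prefix hpre2 hdl)
      have : w.length = m := by omega
      rw [hwt, this]
  · rintro (rfl | ⟨hw, hr⟩)
    · refine ⟨hxne, (repB_succ_iff hxne hm_spec).mpr ⟨List.take_prefix m S, ?_⟩⟩
      rw [hxdl]
      exact hm_min (m - 1) (by omega)
    · exact ⟨hw, repB_mono (by omega) hr⟩

lemma secset_finite (T : List A) (j : ℕ) : {i | Secondary T i ∧ i ≤ j}.Finite :=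
  (Set.finite_Iic j).subset fun i hi => hi.2

lemma count (T : List A) : ∀ j, j ≤ T.length →
    (Rset T j).Finite ∧ (Rset T j).ncard + {i | Secondary T i ∧ i ≤ j}.ncard = j := by
  intro j
  induction j with
  | zero =>
    intro _
    have h1 : Rset T 0 = ∅ := rset_zero T
    have h2 : {i | Secondary T i ∧ i ≤ 0} = (∅ : Set ℕ) := by
      ext i
      simp only [Set.mem_setOf_eq, Set.mem_empty_iff_false, iff_false, not_and]
      intro hsec
      have := hsec.1
      omega
    rw [h1, h2]
    simp
  | succ j ih =>
    intro hj
    obtain ⟨hfin, hcard⟩ := ih (by omega)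
    by_cases hsec : Secondary T (j + 1)
    · have h1 : Rset T (j + 1) = Rset T j := rset_succ_of_secondary hsec
      have h2 : {i | Secondary T i ∧ i ≤ j + 1} = insert (j + 1) {i | Secondary T i ∧ i ≤ j} := by
        ext i
        simp only [Set.mem_setOf_eq, Set.mem_insert_iff]
        constructor
        · rintro ⟨hs, hle⟩
          by_cases h : i = j + 1
          · exact Or.inl h
          · exact Or.inr ⟨hs, by omega⟩
        · rintro (rfl | ⟨hs, hle⟩)
          · exact ⟨hsec, le_rfl⟩
          · exact ⟨hs, by omega⟩
      have hnm : (j + 1) ∉ {i | Secondary T i ∧ i ≤ j} := by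
        simp only [Set.mem_setOf_eq, not_and]
        intro _
        omega
      rw [h1, h2, Set.ncard_insert_of_notMem hnm (secset_finite T j)]
      exact ⟨hfin, by omega⟩
    · obtain ⟨x, hx, hxeq⟩ := rset_succ_of_primary hj hsec
      have h2 : {i | Secondary T i ∧ i ≤ j + 1} = {i | Secondary T i ∧ i ≤ j} := by
        ext i
        simp only [Set.mem_setOf_eq]
        constructor
        · rintro ⟨hs, hle⟩
          refine ⟨hs, ?_⟩
          by_cases h : i = j + 1
          · exact absurd (h ▸ hs) hsec
          · omega
        · rintro ⟨hs, hle⟩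
          exact ⟨hs, by omega⟩
      rw [hxeq, h2, Set.ncard_insert_of_notMem hx hfin]
      exact ⟨hfin.insert x, by omega⟩

lemma represented_iff_repB (T w : List A) :
    Represented T w ↔ RepB T w T.length := by
  constructor
  · rintro ⟨p, hinc, hocc⟩
    refine ⟨p, hinc, fun ℓ h1 h2 => ?_⟩
    have ho := hocc ℓ h1 h2
    obtain ⟨hp1, hp2, -⟩ := id ho
    rw [List.length_take, min_eq_left h2] at hp2
    exact ⟨by omega, ho⟩
  · rintro ⟨p, hinc, hocc⟩
    exact ⟨p, hinc, fun ℓ h1 h2 => (hocc ℓ h1 h2).2⟩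

end PosHeap

/-- Node count of the position heap: the set of nonempty strings represented in `T`
is finite, and its cardinality equals `|T|` minus the number of secondary positions
of `T`. -/
theorem represented_count {A : Type*} (T : List A) :
    {w : List A | w ≠ [] ∧ Represented T w}.Finite ∧
    {w : List A | w ≠ [] ∧ Represented T w}.ncard
      = T.length - {j : ℕ | Secondary T j}.ncard := by
  obtain ⟨hfin, hcard⟩ := PosHeap.count T T.length le_rfl
  have h1 : PosHeap.Rset T T.length = {w : List A | w ≠ [] ∧ Represented T w} := by
    ext w
    simp only [PosHeap.Rset, Set.mem_setOf_eq]
    rw [PosHeap.represented_iff_repB]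
  have h2 : {i | Secondary T i ∧ i ≤ T.length} = {j : ℕ | Secondary T j} := by
    ext i
    simp only [Set.mem_setOf_eq, and_iff_left_iff_imp]
    intro hs
    exact hs.2.1
  rw [h1, h2] at hcard
  exact ⟨h1 ▸ hfin, by omega⟩
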